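/- Subsequence filtering principle: Let P' and Q be strings over Σ, and let Q' be a subsequence of Q. For each symbol q define B(q) = {b ∈ Σ : sub(q,b) ≤ η} (with q ∈ B(q) since sub(q,q)=0) and c(q) = min over q' ∈ Σ_ε \ B(q) of sub(q,q'). If no symbol of P' lies in B(Q') := ∪_{q ∈ Q'} B(q), and Σ_{q ∈ Q'} c(q) ≥ τ, then wed(P', Q) ≥ τ. -/

import Mathlib

/-- Weighted edit distance over strings on alphabet `α`, with `none` playing the
role of the empty symbol `ε`; `sub a b` is the cost of substituting `a` by `b`,
`sub none (some b)` the insertion cost and `sub (some a) none` the deletion cost. -/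
noncomputable def wed {α : Type*} (sub : Option α → Option α → ℝ) : List α → List α → ℝ
  | [], Q => (Q.map (fun q => sub none (some q))).sum
  | p :: P, [] => sub (some p) none + wed sub P []
  | p :: P, q :: Q =>
      min (min (wed sub P Q + sub (some p) (some q))
               (wed sub P (q :: Q) + sub (some p) none))
          (wed sub (p :: P) Q + sub none (some q))
termination_by P Q => P.length + Q.length
decreasing_by all_goals (simp [List.length]; try omega)

open scoped Classical in
/-- Substitution neighborhood `B(q) = {b ∈ Σ : sub(q,b) ≤ η}`. -/
noncomputable def subNbhd {α : Type*} [Fintype α] (sub : Option α → Option α → ℝ)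
    (η : ℝ) (q : α) : Finset α :=
  Finset.univ.filter (fun b => sub (some q) (some b) ≤ η)

open scoped Classical in
/-- The cost `c(q) = min_{q' ∈ Σ_ε \ B(q)} sub(q,q')`.  The minimum is over a
nonempty finite set since `ε` (i.e. `none`) is never in `B(q)`. -/
noncomputable def subCost {α : Type*} [Fintype α] (sub : Option α → Option α → ℝ)
    (η : ℝ) (q : α) : ℝ :=
  Finset.inf'
    (Finset.univ.filter (fun x : Option α => x ∉ (subNbhd sub η q).image some))
    ⟨none, by simp⟩ (fun x => sub (some q) x)

open scoped Classical in
lemma subCost_le {α : Type*} [Fintype α] (sub : Option α → Option α → ℝ)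
    (η : ℝ) (q : α) (x : Option α) (hx : x ∉ (subNbhd sub η q).image some) :
    subCost sub η q ≤ sub (some q) x := by
  classical
  apply Finset.inf'_le
  simp only [Finset.mem_filter, Finset.mem_univ, true_and]
  convert hx

lemma subCost_le_none {α : Type*} [Fintype α] (sub : Option α → Option α → ℝ)
    (η : ℝ) (q : α) : subCost sub η q ≤ sub (some q) none :=
  subCost_le sub η q none (by simp)

lemma subCost_le_some {α : Type*} [Fintype α] (sub : Option α → Option α → ℝ)
    (η : ℝ) (q p : α) (hp : p ∉ subNbhd sub η q) :
    subCost sub η q ≤ sub (some q) (some p) :=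
  subCost_le sub η q (some p) (by simpa using hp)

lemma wed_nonneg {α : Type*} (sub : Option α → Option α → ℝ)
    (hnn : ∀ a b : Option α, 0 ≤ sub a b) :
    ∀ P Q : List α, 0 ≤ wed sub P Q
  | [], Q => by
    rw [wed]
    apply List.sum_nonneg
    intro x hx
    simp only [List.mem_map] at hx
    obtain ⟨q, _, rfl⟩ := hx
    exact hnn _ _
  | p :: P, [] => by
    rw [wed]
    exact add_nonneg (hnn _ _) (wed_nonneg sub hnn P [])
  | p :: P, q :: Q => by
    rw [wed]
    refine le_min (le_min ?_ ?_) ?_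
    · exact add_nonneg (wed_nonneg sub hnn P Q) (hnn _ _)
    · exact add_nonneg (wed_nonneg sub hnn P (q :: Q)) (hnn _ _)
    · exact add_nonneg (wed_nonneg sub hnn (p :: P) Q) (hnn _ _)
  termination_by P Q => P.length + Q.length
  decreasing_by all_goals (simp [List.length]; try omega)

lemma key_lemma {α : Type*} [Fintype α] (sub : Option α → Option α → ℝ)
    (hnn : ∀ a b : Option α, 0 ≤ sub a b)
    (hsym : ∀ a b : Option α, sub a b = sub b a) (η : ℝ) :
    ∀ P' Q Q' : List α, Q'.Sublist Q →
      (∀ p ∈ P', ∀ q ∈ Q', p ∉ subNbhd sub η q) →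
      (Q'.map (subCost sub η)).sum ≤ wed sub P' Q
  | [], Q, Q', hs, _ => by
    rw [wed]
    refine le_trans (List.Sublist.sum_le_sum (hs.map (subCost sub η)) ?_) ?_
    · intro a ha
      simp only [List.mem_map] at ha
      obtain ⟨q, _, rfl⟩ := ha
      exact le_trans (Finset.le_inf' _ _ (fun x _ => hnn _ _)) le_rfl
    · apply List.sum_le_sum
      intro q _
      rw [hsym]
      exact subCost_le_none sub η q
  | p :: P, [], Q', hs, _ => by
    rw [List.sublist_nil.mp hs]
    simpa using wed_nonneg sub hnn (p :: P) []
  | p :: P, q :: Qs, Q', hs, hd => by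
    rw [wed]
    have hdP : ∀ p' ∈ P, ∀ q' ∈ Q', p' ∉ subNbhd sub η q' :=
      fun p' hp' => hd p' (List.mem_cons_of_mem _ hp')
    rcases List.sublist_cons_iff.mp hs with h1 | ⟨Q'', rfl, h2⟩
    · -- Q' is a sublist of Qs
      refine le_min (le_min ?_ ?_) ?_
      · exact le_add_of_le_of_nonneg (key_lemma sub hnn hsym η P Qs Q' h1 hdP) (hnn _ _)
      · exact le_add_of_le_of_nonneg
          (key_lemma sub hnn hsym η P (q :: Qs) Q' hs hdP) (hnn _ _)
      · exact le_add_of_le_of_nonneg (key_lemma sub hnn hsym η (p :: P) Qs Q' h1 hd) (hnn _ _)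
    · -- Q' = q :: Q''
      have hdP'' : ∀ p' ∈ p :: P, ∀ q' ∈ Q'', p' ∉ subNbhd sub η q' :=
        fun p' hp' q' hq' => hd p' hp' q' (List.mem_cons_of_mem _ hq')
      simp only [List.map_cons, List.sum_cons]
      refine le_min (le_min ?_ ?_) ?_
      · have h3 := key_lemma sub hnn hsym η P Qs Q''
          h2 (fun p' hp' q' hq' => hdP p' hp' q' (List.mem_cons_of_mem _ hq'))
        have h4 : subCost sub η q ≤ sub (some p) (some q) := by
          rw [hsym]
          exact subCost_le_some sub η q p (hd p (List.mem_cons_self (a := p) (l := P)) q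
            (List.mem_cons_self (a := q) (l := Q'')))
        linarith
      · have h3 := key_lemma sub hnn hsym η P (q :: Qs) (q :: Q'') hs hdP
        simp only [List.map_cons, List.sum_cons] at h3
        linarith [hnn (some p) none]
      · have h3 := key_lemma sub hnn hsym η (p :: P) Qs Q'' h2 hdP''
        have h4 : subCost sub η q ≤ sub none (some q) := by
          rw [hsym]
          exact subCost_le_none sub η q
        linarith
  termination_by P' Q _ => P'.length + Q.length
  decreasing_by all_goals (simp [List.length]; try omega)

/-- Subsequence filtering principle: if `Q'` is a subsequence of the
query `Q` with total cost `∑_{q ∈ Q'} c(q) ≥ τ`, and no symbol of `P'` lies in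
`B(Q') = ⋃_{q ∈ Q'} B(q)`, then `wed(P',Q) ≥ τ`. -/
theorem subsequence_filtering {α : Type*} [Fintype α]
    (sub : Option α → Option α → ℝ)
    (hnn : ∀ a b : Option α, 0 ≤ sub a b)
    (hsym : ∀ a b : Option α, sub a b = sub b a)
    (hzero : ∀ a : Option α, sub a a = 0)
    (η : ℝ) (hη : 0 ≤ η) (τ : ℝ) (hτ : 0 < τ)
    (P' Q Q' : List α) (hQ' : Q'.Sublist Q)
    (hdisj : ∀ p ∈ P', ∀ q ∈ Q', p ∉ subNbhd sub η q)
    (hcost : τ ≤ (Q'.map (subCost sub η)).sum) :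
    τ ≤ wed sub P' Q :=
  le_trans hcost (key_lemma sub hnn hsym η P' Q Q' hQ' hdisj)
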